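/- arXiv:1207.4028 — 4 statements merged into one kernel-verified Lean document; each statement's English description precedes it below -/
import Mathlib

section
/- With ξ a P₀-Lévy process with exponent ψ₀, X independent of ξ with support in A, and P defined by dP/dP₀|_{G_t} = exp(Xξ_t − ψ₀(X)t), one has for purely imaginary α: E^P[exp(αξ_t) | X] = exp((ψ₀(α + X) − ψ₀(X)) t). Thus ξ carries conditional exponent ψ₀(α+X) − ψ₀(X) under P. -/
open MeasureTheory ProbabilityTheory Real NNReal
open scoped ENNReal

lemma esscher_Mmeas (μY : Measure ℝ) [SFinite μY] (β : ℂ) :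
    StronglyMeasurable (fun x : ℝ => ∫ y : ℝ, Complex.exp ((β + x) * y) ∂μY) := by
  have h : Measurable (fun p : ℝ × ℝ => Complex.exp ((β + p.1) * p.2)) := by
    apply Complex.measurable_exp.comp
    exact ((measurable_const.add (Complex.measurable_ofReal.comp measurable_fst)).mul
      (Complex.measurable_ofReal.comp measurable_snd))
  exact h.stronglyMeasurable.integral_prod_right'

lemma esscher_exp_norm (w : ℂ) (hw : w.re = 0) (x y : ℝ) :
    ‖Complex.exp ((w + x) * y)‖ = Real.exp (x * y) := by
  rw [Complex.norm_exp]
  congr 1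
  simp [Complex.mul_re, hw]

lemma esscher_master {μX μY : Measure ℝ} [IsProbabilityMeasure μX] [IsProbabilityMeasure μY]
    (β : ℂ) (hβ : β.re = 0) (G : ℝ → ℂ) (hG : StronglyMeasurable G)
    (hGb : ∀ᵐ x ∂μX, ‖G x‖ ≤ 1)
    (M : ℂ → ℝ → ℂ) (hM : M = fun w (x : ℝ) => ∫ y : ℝ, Complex.exp ((w + x) * y) ∂μY)
    (hβint : ∀ᵐ x : ℝ ∂μX, Integrable (fun y : ℝ => Complex.exp ((β + x) * y)) μY)
    (h0int : ∀ᵐ x : ℝ ∂μX, Integrable (fun y : ℝ => Complex.exp (((0:ℂ) + x) * y)) μY) :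
    Integrable (fun p : ℝ × ℝ => G p.1 * Complex.exp ((β + p.1) * p.2) * (M 0 p.1)⁻¹)
      (μX.prod μY) ∧
    ∫ p, G p.1 * Complex.exp ((β + p.1) * p.2) * (M 0 p.1)⁻¹ ∂(μX.prod μY)
      = ∫ x, G x * M β x * (M 0 x)⁻¹ ∂μX := by
  have hMsm : ∀ w : ℂ, StronglyMeasurable (M w) := by
    intro w; rw [hM]; exact esscher_Mmeas μY w
  set F : ℝ × ℝ → ℂ := fun p => G p.1 * Complex.exp ((β + p.1) * p.2) * (M 0 p.1)⁻¹ with hF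
  have hFsm : StronglyMeasurable F := by
    apply Measurable.stronglyMeasurable
    apply Measurable.mul
    apply Measurable.mul
    · exact hG.measurable.comp measurable_fst
    · exact Complex.measurable_exp.comp
        ((measurable_const.add (Complex.measurable_ofReal.comp measurable_fst)).mul
          (Complex.measurable_ofReal.comp measurable_snd))
    · exact ((hMsm 0).measurable.comp measurable_fst).inv
  -- integrability on the product
  have hFint : Integrable F (μX.prod μY) := by
    rw [integrable_prod_iff hFsm.aestronglyMeasurable]
    constructor
    · filter_upwards [hβint] with x hx
      exact (hx.const_mul (G x)).mul_const ((M 0 x)⁻¹)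
    · apply Integrable.mono' (integrable_const (1:ℝ))
      · exact hFsm.aestronglyMeasurable.norm.integral_prod_right'
      · filter_upwards [hGb, h0int] with x hGx h0x
        have hnn : 0 ≤ ∫ y, ‖F (x, y)‖ ∂μY := integral_nonneg fun y => norm_nonneg _
        rw [Real.norm_of_nonneg hnn]
        have heq : (fun y => ‖F (x, y)‖)
            = fun y => (‖G x‖ * ‖(M 0 x)⁻¹‖) * Real.exp (x * y) := by
          funext y
          rw [hF]
          simp only [norm_mul]
          rw [esscher_exp_norm β hβ x y]
          ring
        rw [heq, integral_const_mul]
        have h0re : ∫ y : ℝ, Real.exp (x * y) ∂μY = (M 0 x).re := by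
          have hpt : (fun y : ℝ => Real.exp (x * y))
              = fun y : ℝ => (Complex.exp (((0:ℂ) + x) * y)).re := by
            funext y
            rw [zero_add, ← Complex.ofReal_mul, Complex.exp_ofReal_re]
          rw [hpt, hM]
          simpa using integral_re h0x
        rw [h0re]
        have h1 : (M 0 x).re ≤ ‖M 0 x‖ := by
          exact Complex.re_le_norm _
        have h2 : ‖(M 0 x)⁻¹‖ * (M 0 x).re ≤ 1 := by
          rw [norm_inv]
          rcases eq_or_ne (M 0 x) 0 with h | h
          · simp [h]
          · have hpos : 0 < ‖M 0 x‖ := norm_pos_iff.mpr h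
            calc ‖M 0 x‖⁻¹ * (M 0 x).re ≤ ‖M 0 x‖⁻¹ * ‖M 0 x‖ :=
                  mul_le_mul_of_nonneg_left h1 (by positivity)
            _ = 1 := inv_mul_cancel₀ hpos.ne'
        rcases le_or_gt ((M 0 x).re) 0 with hre | hre
        · have hle : ‖G x‖ * ‖(M 0 x)⁻¹‖ * (M 0 x).re ≤ 0 :=
            mul_nonpos_of_nonneg_of_nonpos (by positivity) hre
          linarith
        · calc ‖G x‖ * ‖(M 0 x)⁻¹‖ * (M 0 x).re
              = ‖G x‖ * (‖(M 0 x)⁻¹‖ * (M 0 x).re) := by ring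
          _ ≤ 1 * 1 := mul_le_mul hGx h2 (by positivity) (by norm_num)
          _ = 1 := by norm_num
  refine ⟨hFint, ?_⟩
  rw [integral_prod F hFint]
  congr 1
  funext x
  have : (fun y => F (x, y)) = fun y : ℝ => G x * Complex.exp ((β + x) * y) * (M 0 x)⁻¹ := rfl
  rw [this]
  simp_rw [mul_assoc, integral_const_mul, ← mul_assoc]
  rw [hM]
  simp_rw [integral_mul_const]
  ring

/-- With ξ a P₀-Lévy process with exponent ψ₀, X independent of ξ with
support in A, and P defined by dP/dP₀|_{G_t} = exp(Xξ_t − ψ₀(X)t), one has for purely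
imaginary α:  E^P[exp(αξ_t) | X] = exp((ψ₀(α + X) − ψ₀(X)) t). -/
theorem randomized_esscher_conditional_exponent
    {Ω : Type*} [m : MeasurableSpace Ω] (P₀ : Measure Ω) [IsProbabilityMeasure P₀]
    (ξ : ℝ≥0 → Ω → ℝ) (hξm : ∀ t, Measurable (ξ t))
    (X : Ω → ℝ) (hX : Measurable X)
    (A : Set ℝ) (hXA : ∀ᵐ ω ∂P₀, X ω ∈ A)
    (ψ₀ : ℂ → ℂ) (ψ₀r : ℝ → ℝ)
    -- ψ₀ is real-valued on A, with real restriction ψ₀r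
    (hreal : ∀ x ∈ A, ψ₀ (x : ℂ) = (ψ₀r x : ℂ))
    -- X is independent of the process under P₀
    (hindep : ∀ t : ℝ≥0, IndepFun X (ξ t) P₀)
    -- Lévy exponent of ξ under P₀ on A_ℂ = {w : Re w ∈ A}
    (hmgf : ∀ w : ℂ, w.re ∈ A → ∀ t : ℝ≥0,
      Integrable (fun ω => Complex.exp (w * (ξ t ω : ℂ))) P₀ ∧
      ∫ ω, Complex.exp (w * (ξ t ω : ℂ)) ∂P₀ = Complex.exp (ψ₀ w * ((t : ℝ) : ℂ)))
    (t : ℝ≥0) (α : ℂ) (hα : α.re = 0) :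
    (P₀.withDensity
        (fun ω => ENNReal.ofReal (Real.exp (X ω * ξ t ω - ψ₀r (X ω) * t))))[
      (fun ω => Complex.exp (α * (ξ t ω : ℂ))) | MeasurableSpace.comap X inferInstance]
      =ᵐ[P₀.withDensity
        (fun ω => ENNReal.ofReal (Real.exp (X ω * ξ t ω - ψ₀r (X ω) * t)))]
      fun ω => Complex.exp ((ψ₀ (α + (X ω : ℂ)) - ψ₀ ((X ω : ℂ))) * ((t : ℝ) : ℂ)) := by
  classical
  set t' : ℝ := (t : ℝ) with ht'def
  set Y : Ω → ℝ := ξ t with hYdef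
  have hYm : Measurable Y := hξm t
  set μX : Measure ℝ := P₀.map X with hμXdef
  set μY : Measure ℝ := P₀.map Y with hμYdef
  haveI : IsProbabilityMeasure μX := Measure.isProbabilityMeasure_map hX.aemeasurable
  haveI : IsProbabilityMeasure μY := Measure.isProbabilityMeasure_map hYm.aemeasurable
  have hpairm : Measurable fun ω => (X ω, Y ω) := hX.prodMk hYm
  have hprod : P₀.map (fun ω => (X ω, Y ω)) = μX.prod μY :=
    (indepFun_iff_map_prod_eq_prod_map_map hX.aemeasurable hYm.aemeasurable).mp (hindep t)
  -- mgf of μY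
  have hmgfY : ∀ w : ℂ, w.re ∈ A →
      Integrable (fun y : ℝ => Complex.exp (w * y)) μY ∧
      ∫ y : ℝ, Complex.exp (w * y) ∂μY = Complex.exp (ψ₀ w * (t' : ℂ)) := by
    intro w hw
    have hwm : Measurable fun y : ℝ => Complex.exp (w * y) :=
      Complex.measurable_exp.comp (measurable_const.mul Complex.measurable_ofReal)
    obtain ⟨h1, h2⟩ := hmgf w hw t
    refine ⟨(integrable_map_measure hwm.aestronglyMeasurable hYm.aemeasurable).mpr h1, ?_⟩
    rw [hμYdef, integral_map hYm.aemeasurable hwm.aestronglyMeasurable]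
    exact h2
  set M : ℂ → ℝ → ℂ := fun w (x : ℝ) => ∫ y : ℝ, Complex.exp ((w + x) * y) ∂μY with hMdef
  have hMsm : ∀ w, StronglyMeasurable (M w) := fun w => esscher_Mmeas μY w
  have hMα : ∀ x ∈ A, M α x = Complex.exp (ψ₀ (α + x) * (t' : ℂ)) := by
    intro x hx
    exact (hmgfY _ (by simpa [hα] using hx)).2
  have hM0 : ∀ x ∈ A, M 0 x = Complex.exp (ψ₀ x * (t' : ℂ)) := by
    intro x hx
    have h := (hmgfY ((0 : ℂ) + x) (by simpa using hx)).2
    rw [show M 0 x = ∫ y : ℝ, Complex.exp (((0:ℂ) + x) * y) ∂μY from rfl, h, zero_add]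
  have hM0r : ∀ x ∈ A, M 0 x = ((Real.exp (ψ₀r x * t') : ℝ) : ℂ) := by
    intro x hx
    rw [hM0 x hx, hreal x hx, Complex.ofReal_exp, Complex.ofReal_mul]
  have hM0ne : ∀ x ∈ A, M 0 x ≠ 0 := fun x hx => by
    rw [hM0 x hx]; exact Complex.exp_ne_zero _
  have hM0norm : ∀ x ∈ A, ‖M 0 x‖ = Real.exp (ψ₀r x * t') := by
    intro x hx
    rw [hM0r x hx, Complex.norm_real, Real.norm_eq_abs, abs_of_pos (Real.exp_pos _)]
  have hMnorm : ∀ w : ℂ, w.re = 0 → ∀ x ∈ A, ‖M w x‖ ≤ Real.exp (ψ₀r x * t') := by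
    intro w hw x hx
    have h0x : Integrable (fun y : ℝ => Complex.exp (((0 : ℂ) + x) * y)) μY :=
      (hmgfY _ (by simpa using hx)).1
    calc ‖M w x‖ ≤ ∫ y : ℝ, ‖Complex.exp ((w + x) * y)‖ ∂μY := norm_integral_le_integral_norm _
    _ = ∫ y : ℝ, Real.exp (x * y) ∂μY := by simp_rw [esscher_exp_norm w hw]
    _ = (M 0 x).re := by
        have hpt : (fun y : ℝ => Real.exp (x * y))
            = fun y : ℝ => (Complex.exp (((0 : ℂ) + x) * y)).re := by
          funext y; rw [zero_add, ← Complex.ofReal_mul, Complex.exp_ofReal_re]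
        rw [hpt, hMdef]
        simpa using integral_re h0x
    _ ≤ ‖M 0 x‖ := by exact Complex.re_le_norm _
    _ = _ := hM0norm x hx
  -- the good measurable set A'
  have hAint : ∀ w : ℂ,
      MeasurableSet {x : ℝ | Integrable (fun y : ℝ => Complex.exp ((w + x) * y)) μY} := by
    intro w
    have hsm : StronglyMeasurable
        (Function.uncurry fun (x : ℝ) (y : ℝ) => Complex.exp ((w + x) * y)) := by
      apply Measurable.stronglyMeasurable
      exact Complex.measurable_exp.comp
        ((measurable_const.add (Complex.measurable_ofReal.comp measurable_fst)).mul
          (Complex.measurable_ofReal.comp measurable_snd))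
    exact measurableSet_integrable hsm
  set A' : Set ℝ := {x | Integrable (fun y : ℝ => Complex.exp ((α + x) * y)) μY} ∩
      {x | Integrable (fun y : ℝ => Complex.exp (((0 : ℂ) + x) * y)) μY} ∩
      {x | ‖M α x‖ ≤ ‖M 0 x‖} ∩ {x | M 0 x ≠ 0} with hA'def
  have hA'meas : MeasurableSet A' := by
    refine (((hAint α).inter (hAint 0)).inter ?_).inter ?_
    · exact measurableSet_le (hMsm α).measurable.norm (hMsm 0).measurable.norm
    · exact ((hMsm 0).measurable (measurableSet_singleton 0)).compl
  have hAsub : A ⊆ A' := by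
    intro x hx
    refine ⟨⟨⟨?_, ?_⟩, ?_⟩, hM0ne x hx⟩
    · show Integrable (fun y : ℝ => Complex.exp ((α + x) * y)) μY
      exact (hmgfY (α + x) (by simpa [hα] using hx)).1
    · show Integrable (fun y : ℝ => Complex.exp (((0:ℂ) + x) * y)) μY
      exact (hmgfY ((0 : ℂ) + x) (by simpa using hx)).1
    · show ‖M α x‖ ≤ ‖M 0 x‖
      rw [hM0norm x hx]; exact hMnorm α hα x hx
  have hXA' : ∀ᵐ x : ℝ ∂μX, x ∈ A' := by
    rw [hμXdef]
    exact (MeasureTheory.ae_map_iff hX.aemeasurable hA'meas).mpr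
      (hXA.mono fun ω h => hAsub h)
  have hαint : ∀ᵐ x : ℝ ∂μX, Integrable (fun y : ℝ => Complex.exp ((α + x) * y)) μY :=
    hXA'.mono fun x hx => hx.1.1.1
  have h0int : ∀ᵐ x : ℝ ∂μX, Integrable (fun y : ℝ => Complex.exp (((0 : ℂ) + x) * y)) μY :=
    hXA'.mono fun x hx => hx.1.1.2
  -- the measure P
  have hm : MeasurableSpace.comap X inferInstance ≤ m := hX.comap_le
  set ρ : Ω → ENNReal := fun ω => ENNReal.ofReal (Real.exp (X ω * Y ω - ψ₀r (X ω) * t'))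
    with hρdef
  set P : Measure Ω := P₀.withDensity ρ with hPdef
  set d : Ω → ℝ≥0 := fun ω => Real.toNNReal (Real.exp (X ω * Y ω) * ‖(M 0 (X ω))⁻¹‖)
    with hddef
  have hdm : Measurable d := by
    apply Measurable.real_toNNReal
    exact (Real.measurable_exp.comp (hX.mul hYm)).mul
      (((hMsm 0).measurable.comp hX).inv.norm)
  have hdcoe : ∀ ω, X ω ∈ A → ((d ω : ℝ)) = Real.exp (X ω * Y ω - ψ₀r (X ω) * t') := by
    intro ω hω
    have h1 : ‖(M 0 (X ω))⁻¹‖ = (Real.exp (ψ₀r (X ω) * t'))⁻¹ := by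
      rw [norm_inv, hM0norm _ hω]
    rw [hddef]
    simp only
    rw [Real.coe_toNNReal _ (by positivity), h1, ← Real.exp_neg, ← Real.exp_add]
    ring_nf
  have hρd : ρ =ᵐ[P₀] fun ω => ((d ω : ℝ≥0∞)) := by
    filter_upwards [hXA] with ω hω
    rw [hρdef]
    simp only
    rw [← hdcoe ω hω, ENNReal.ofReal_coe_nnreal]
  have hPd : P = P₀.withDensity fun ω => ((d ω : ℝ≥0∞)) := withDensity_congr_ae hρd
  -- master on Ω
  have masterΩ : ∀ β : ℂ, β.re = 0 →
      (∀ᵐ x : ℝ ∂μX, Integrable (fun y : ℝ => Complex.exp ((β + x) * y)) μY) →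
      ∀ G : ℝ → ℂ, StronglyMeasurable G → (∀ᵐ x : ℝ ∂μX, ‖G x‖ ≤ 1) →
      Integrable (fun ω => G (X ω) * Complex.exp ((β + X ω) * Y ω) * (M 0 (X ω))⁻¹) P₀ ∧
      ∫ ω, G (X ω) * Complex.exp ((β + X ω) * Y ω) * (M 0 (X ω))⁻¹ ∂P₀
        = ∫ x, G x * M β x * (M 0 x)⁻¹ ∂μX := by
    intro β hβ hβint G hG hGb
    obtain ⟨hFint, hFval⟩ := esscher_master β hβ G hG hGb M hMdef hβint h0int
    have hFsm : StronglyMeasurable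
        (fun p : ℝ × ℝ => G p.1 * Complex.exp ((β + p.1) * p.2) * (M 0 p.1)⁻¹) := by
      apply Measurable.stronglyMeasurable
      apply Measurable.mul
      apply Measurable.mul
      · exact hG.measurable.comp measurable_fst
      · exact Complex.measurable_exp.comp
          ((measurable_const.add (Complex.measurable_ofReal.comp measurable_fst)).mul
            (Complex.measurable_ofReal.comp measurable_snd))
      · exact ((hMsm 0).measurable.comp measurable_fst).inv
    constructor
    · exact (integrable_map_measure hFsm.aestronglyMeasurable hpairm.aemeasurable).mp
        (by rw [hprod]; exact hFint)
    · calc ∫ ω, G (X ω) * Complex.exp ((β + X ω) * Y ω) * (M 0 (X ω))⁻¹ ∂P₀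
          = ∫ p, (fun p : ℝ × ℝ => G p.1 * Complex.exp ((β + p.1) * p.2) * (M 0 p.1)⁻¹) p
              ∂(P₀.map fun ω => (X ω, Y ω)) :=
            (integral_map hpairm.aemeasurable hFsm.aestronglyMeasurable).symm
      _ = _ := by rw [hprod]; exact hFval
  -- P is a finite measure
  haveI hPfin : IsFiniteMeasure P := by
    constructor
    rw [hPd, withDensity_apply _ MeasurableSet.univ, setLIntegral_univ]
    obtain ⟨hint, -⟩ := masterΩ 0 rfl h0int (fun _ => 1) stronglyMeasurable_const
      (Filter.Eventually.of_forall fun x => by norm_num)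
    have heq : (fun ω => ((d ω : ℝ≥0∞)))
        = fun ω => ENNReal.ofReal
            ‖(1 : ℂ) * Complex.exp (((0 : ℂ) + X ω) * Y ω) * (M 0 (X ω))⁻¹‖ := by
      funext ω
      rw [one_mul, norm_mul, esscher_exp_norm 0 rfl (X ω) (Y ω), hddef]
      simp only [ENNReal.ofReal]
    rw [heq]
    exact (hasFiniteIntegral_iff_norm _).mp hint.2
  haveI : SigmaFinite (P.trim hm) := by infer_instance
  -- f and g
  set f : Ω → ℂ := fun ω => Complex.exp (α * (Y ω : ℂ)) with hfdef
  set g : Ω → ℂ := fun ω =>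
    Complex.exp ((ψ₀ (α + (X ω : ℂ)) - ψ₀ ((X ω : ℂ))) * (t' : ℂ)) with hgdef
  set g' : Ω → ℂ := fun ω => M α (X ω) * (M 0 (X ω))⁻¹ with hg'def
  have hgg' : ∀ x ∈ A,
      Complex.exp ((ψ₀ (α + (x : ℂ)) - ψ₀ (x : ℂ)) * (t' : ℂ)) = M α x * (M 0 x)⁻¹ := by
    intro x hx
    rw [hMα x hx, hM0 x hx, ← Complex.exp_neg, ← Complex.exp_add, sub_mul, ← sub_eq_add_neg]
  have hPac : P ≪ P₀ := withDensity_absolutelyContinuous P₀ ρ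
  have hPA : ∀ᵐ ω ∂P, X ω ∈ A := hPac.ae_le hXA
  have hgP : g =ᵐ[P] g' := by
    filter_upwards [hPA] with ω h
    exact hgg' _ h
  have hXc : Measurable[MeasurableSpace.comap X inferInstance] X :=
    Measurable.of_comap_le le_rfl
  have hg'm : Measurable[MeasurableSpace.comap X inferInstance] g' :=
    ((hMsm α).measurable.mul (hMsm 0).measurable.inv).comp hXc
  have hgm' : AEStronglyMeasurable[MeasurableSpace.comap X inferInstance] g P :=
    ⟨g', hg'm.stronglyMeasurable, hgP⟩
  have hfP : Integrable f P := by
    refine Integrable.mono' (integrable_const (1 : ℝ)) ?_ ?_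
    · exact (Complex.measurable_exp.comp
        (measurable_const.mul (Complex.measurable_ofReal.comp hYm))).aestronglyMeasurable
    · refine Filter.Eventually.of_forall fun ω => ?_
      rw [hfdef]
      simp only
      rw [Complex.norm_exp]
      simp [Complex.mul_re, hα]
  have hgP1 : Integrable g P := by
    refine Integrable.mono' (integrable_const (1 : ℝ)) ?_ ?_
    · exact ((hg'm.mono hm le_rfl).stronglyMeasurable.aestronglyMeasurable).congr hgP.symm
    · filter_upwards [hPA] with ω h
      rw [hgdef]
      simp only
      rw [hgg' _ h, norm_mul, norm_inv, hM0norm _ h]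
      have h1 := hMnorm α hα _ h
      have hp := Real.exp_pos (ψ₀r (X ω) * t')
      calc ‖M α (X ω)‖ * (Real.exp (ψ₀r (X ω) * t'))⁻¹
          ≤ Real.exp (ψ₀r (X ω) * t') * (Real.exp (ψ₀r (X ω) * t'))⁻¹ :=
            mul_le_mul_of_nonneg_right h1 (by positivity)
      _ = 1 := mul_inv_cancel₀ hp.ne'
  -- set-integral reduction
  have hred : ∀ B : Set ℝ, MeasurableSet B → ∀ h : Ω → ℂ,
      ∫ ω in X ⁻¹' B, h ω ∂P
        = ∫ ω, Set.indicator (X ⁻¹' B) (fun ω => d ω • h ω) ω ∂P₀ := by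
    intro B hB h
    rw [hPd, MeasureTheory.restrict_withDensity (hX hB),
      integral_withDensity_eq_integral_smul hdm h, ← integral_indicator (hX hB)]
  -- main set-integral equality
  have hseteq : ∀ B : Set ℝ, MeasurableSet B →
      ∫ ω in X ⁻¹' B, g ω ∂P = ∫ ω in X ⁻¹' B, f ω ∂P := by
    intro B hB
    set Gb : ℝ → ℂ := B.indicator (fun _ => 1) with hGbdef
    have hGbsm : StronglyMeasurable Gb := stronglyMeasurable_const.indicator hB
    have hGbb : ∀ x, ‖Gb x‖ ≤ 1 := by
      intro x
      rw [hGbdef]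
      by_cases h : x ∈ B <;> simp [Set.indicator, h]
    -- f side
    have hf_side : ∫ ω in X ⁻¹' B, f ω ∂P = ∫ x, Gb x * M α x * (M 0 x)⁻¹ ∂μX := by
      rw [hred B hB f]
      have hae : (fun ω => Set.indicator (X ⁻¹' B) (fun ω => d ω • f ω) ω) =ᵐ[P₀]
          fun ω => Gb (X ω) * Complex.exp ((α + X ω) * Y ω) * (M 0 (X ω))⁻¹ := by
        filter_upwards [hXA] with ω hω
        by_cases hBm : X ω ∈ B
        · rw [Set.indicator_of_mem (by exact hBm)]
          have hGb1 : Gb (X ω) = 1 := Set.indicator_of_mem hBm _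
          rw [NNReal.smul_def, hdcoe ω hω, Complex.real_smul, hGb1, one_mul, hfdef]
          simp only
          rw [hM0r _ hω, Complex.ofReal_exp, Complex.ofReal_exp, ← Complex.exp_neg,
            ← Complex.exp_add, ← Complex.exp_add]
          congr 1
          push_cast
          ring
        · rw [Set.indicator_of_notMem (by exact hBm)]
          have hGb0 : Gb (X ω) = 0 := Set.indicator_of_notMem hBm _
          rw [hGb0, zero_mul, zero_mul]
      rw [integral_congr_ae hae]
      exact (masterΩ α hα hαint Gb hGbsm (Filter.Eventually.of_forall hGbb)).2
    -- g side
    set Gg : ℝ → ℂ := fun x => Gb x * (M α x * (M 0 x)⁻¹) with hGgdef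
    have hGgsm : StronglyMeasurable Gg := by
      apply Measurable.stronglyMeasurable
      exact hGbsm.measurable.mul ((hMsm α).measurable.mul (hMsm 0).measurable.inv)
    have hGgb : ∀ᵐ x : ℝ ∂μX, ‖Gg x‖ ≤ 1 := by
      filter_upwards [hXA'] with x hx
      rw [hGgdef]
      simp only
      rw [norm_mul, norm_mul, norm_inv]
      have h1 : ‖M α x‖ * ‖M 0 x‖⁻¹ ≤ 1 := by
        have hpos : 0 < ‖M 0 x‖ := norm_pos_iff.mpr hx.2
        calc ‖M α x‖ * ‖M 0 x‖⁻¹ ≤ ‖M 0 x‖ * ‖M 0 x‖⁻¹ :=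
              mul_le_mul_of_nonneg_right hx.1.2 (by positivity)
        _ = 1 := mul_inv_cancel₀ hpos.ne'
      calc ‖Gb x‖ * (‖M α x‖ * ‖M 0 x‖⁻¹) ≤ 1 * 1 :=
            mul_le_mul (hGbb x) h1 (by positivity) (by norm_num)
      _ = 1 := by norm_num
    have hg_side : ∫ ω in X ⁻¹' B, g ω ∂P = ∫ x, Gg x * M 0 x * (M 0 x)⁻¹ ∂μX := by
      rw [hred B hB g]
      have hae : (fun ω => Set.indicator (X ⁻¹' B) (fun ω => d ω • g ω) ω) =ᵐ[P₀]
          fun ω => Gg (X ω) * Complex.exp (((0 : ℂ) + X ω) * Y ω) * (M 0 (X ω))⁻¹ := by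
        filter_upwards [hXA] with ω hω
        by_cases hBm : X ω ∈ B
        · rw [Set.indicator_of_mem (by exact hBm)]
          have hGb1 : Gb (X ω) = 1 := Set.indicator_of_mem hBm _
          rw [NNReal.smul_def, hdcoe ω hω, Complex.real_smul, hgdef, hGgdef]
          simp only
          rw [hgg' _ hω, hGb1, one_mul, hM0r _ hω, Complex.ofReal_exp, Complex.ofReal_exp,
            ← Complex.exp_neg]
          rw [show Complex.exp ((X ω * Y ω - ψ₀r (X ω) * t' : ℝ) : ℂ)
              = Complex.exp (((0 : ℂ) + X ω) * Y ω)
                * Complex.exp (-((ψ₀r (X ω) * t' : ℝ) : ℂ)) from by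
            rw [← Complex.exp_add]; congr 1; push_cast; ring]
          ring
        · rw [Set.indicator_of_notMem (by exact hBm)]
          have hGb0 : Gb (X ω) = 0 := Set.indicator_of_notMem hBm _
          rw [hGgdef]
          simp only
          rw [hGb0, zero_mul, zero_mul, zero_mul]
      rw [integral_congr_ae hae]
      exact (masterΩ 0 rfl h0int Gg hGgsm hGgb).2
    rw [hf_side, hg_side]
    apply integral_congr_ae
    filter_upwards [hXA'] with x hx
    show Gb x * (M α x * (M 0 x)⁻¹) * M 0 x * (M 0 x)⁻¹ = Gb x * M α x * (M 0 x)⁻¹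
    calc Gb x * (M α x * (M 0 x)⁻¹) * M 0 x * (M 0 x)⁻¹
        = Gb x * M α x * (M 0 x)⁻¹ * ((M 0 x)⁻¹ * M 0 x) := by ring
      _ = Gb x * M α x * (M 0 x)⁻¹ := by rw [inv_mul_cancel₀ hx.2, mul_one]
  refine (ae_eq_condExp_of_forall_setIntegral_eq hm hfP ?_ ?_ hgm').symm
  · intro s hs hμs
    exact hgP1.integrableOn
  · intro s hs hμs
    obtain ⟨B, hB, rfl⟩ := MeasurableSpace.measurableSet_comap.mp hs
    exact hseteq B hB
end

section
/- Bayes formula for Lévy information: if X has a priori distribution π and ξ_t = x under the information process with fiducial exponent ψ₀, then the conditional distribution of X given F_t = σ(ξ_s, s ≤ t) is π_t(dx) = exp(xξ_t − ψ₀(x)t) π(dx) / ∫ exp(yξ_t − ψ₀(y)t) π(dy). -/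
open MeasureTheory ProbabilityTheory Real NNReal
open scoped ENNReal

section freezeAux

variable {Ω Ω' : Type*} [m : MeasurableSpace Ω] [mΩ' : MeasurableSpace Ω']

/-- Law of a pair of independent random variables is the product of the laws. -/
lemma freeze_map_aux (P₀ : Measure Ω) [IsProbabilityMeasure P₀]
    (X : Ω → ℝ) (Y : Ω → Ω') (hX : Measurable X) (hY : Measurable Y)
    (hindep : IndepFun Y X P₀) :
    P₀.map (fun ω => (Y ω, X ω)) = (P₀.map Y).prod (P₀.map X) :=
  (indepFun_iff_map_prod_eq_prod_map_map hY.aemeasurable hX.aemeasurable).mp hindep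

/-- Freezing lemma, `lintegral` version. -/
lemma freeze_lintegral_aux (P₀ : Measure Ω) [IsProbabilityMeasure P₀]
    (X : Ω → ℝ) (Y : Ω → Ω') (hX : Measurable X) (hY : Measurable Y)
    (hindep : IndepFun Y X P₀) (Φ : Ω' × ℝ → ℝ≥0∞) (hΦ : Measurable Φ) :
    ∫⁻ ω, Φ (Y ω, X ω) ∂P₀ = ∫⁻ ω', ∫⁻ x, Φ (ω', x) ∂(P₀.map X) ∂(P₀.map Y) := by
  haveI : IsProbabilityMeasure (P₀.map X) := Measure.isProbabilityMeasure_map hX.aemeasurable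
  haveI : IsProbabilityMeasure (P₀.map Y) := Measure.isProbabilityMeasure_map hY.aemeasurable
  calc ∫⁻ ω, Φ (Y ω, X ω) ∂P₀
      = ∫⁻ p, Φ p ∂(P₀.map (fun ω => (Y ω, X ω))) :=
        (lintegral_map' hΦ.aemeasurable (hY.aemeasurable.prodMk hX.aemeasurable)).symm
    _ = ∫⁻ p, Φ p ∂((P₀.map Y).prod (P₀.map X)) := by
        rw [freeze_map_aux P₀ X Y hX hY hindep]
    _ = ∫⁻ ω', ∫⁻ x, Φ (ω', x) ∂(P₀.map X) ∂(P₀.map Y) :=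
        lintegral_prod _ hΦ.aemeasurable

/-- Freezing lemma, Bochner integral version. -/
lemma freeze_integral_aux (P₀ : Measure Ω) [IsProbabilityMeasure P₀]
    (X : Ω → ℝ) (Y : Ω → Ω') (hX : Measurable X) (hY : Measurable Y)
    (hindep : IndepFun Y X P₀) (Φ : Ω' × ℝ → ℝ) (hΦ : StronglyMeasurable Φ)
    (hint : Integrable (fun ω => Φ (Y ω, X ω)) P₀) :
    ∫ ω, Φ (Y ω, X ω) ∂P₀ = ∫ ω', ∫ x, Φ (ω', x) ∂(P₀.map X) ∂(P₀.map Y) := by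
  haveI : IsProbabilityMeasure (P₀.map X) := Measure.isProbabilityMeasure_map hX.aemeasurable
  haveI : IsProbabilityMeasure (P₀.map Y) := Measure.isProbabilityMeasure_map hY.aemeasurable
  have hmap := freeze_map_aux P₀ X Y hX hY hindep
  have hΦi : Integrable Φ ((P₀.map Y).prod (P₀.map X)) := by
    rw [← hmap]
    exact (integrable_map_measure hΦ.aestronglyMeasurable (hY.aemeasurable.prodMk hX.aemeasurable)).mpr hint
  calc ∫ ω, Φ (Y ω, X ω) ∂P₀
      = ∫ p, Φ p ∂(P₀.map (fun ω => (Y ω, X ω))) :=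
        (integral_map (hY.aemeasurable.prodMk hX.aemeasurable) hΦ.aestronglyMeasurable).symm
    _ = ∫ p, Φ p ∂((P₀.map Y).prod (P₀.map X)) := by rw [hmap]
    _ = ∫ ω', ∫ x, Φ (ω', x) ∂(P₀.map X) ∂(P₀.map Y) := integral_prod _ hΦi


/-- Transfer an a.e. statement under the image measure back to `P₀`. -/
lemma freeze_ae_aux (P₀ : Measure Ω) (Y : Ω → Ω') (hY : Measurable Y)
    {p : Ω' → Prop} (hp : MeasurableSet {x | p x})
    (h : ∀ᵐ x ∂(P₀.map Y), p x) : ∀ᵐ ω ∂P₀, p (Y ω) :=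
  (MeasureTheory.ae_map_iff hY.aemeasurable hp).mp h

end freezeAux


set_option maxHeartbeats 1000000 in
/-- Core Bayes formula, with an abstract sub-σ-algebra and a measurable `Z` (to be `ξ t`). -/
theorem levy_information_bayes_core
    {Ω : Type*} [m : MeasurableSpace Ω] (P₀ : Measure Ω) [IsProbabilityMeasure P₀]
    (Gs : {Gm : MeasurableSpace Ω // Gm ≤ m})
    (X : Ω → ℝ) (hX : Measurable X) (Z : Ω → ℝ) (hZG : Measurable[Gs.1] Z)
    (ψ₀ : ℝ → ℝ) (hψ₀ : Measurable ψ₀) (T : ℝ)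
    (hindep : Indep (MeasurableSpace.comap X inferInstance) Gs.1 P₀)
    (hint : Integrable (fun ω => Real.exp (X ω * Z ω - ψ₀ (X ω) * T)) P₀)
    (f : ℝ → ℝ) (hf : Measurable f) (C : ℝ) (hC : ∀ x, |f x| ≤ C) :
    (P₀.withDensity (fun ω => ENNReal.ofReal (Real.exp (X ω * Z ω - ψ₀ (X ω) * T))))[(fun ω => f (X ω)) | Gs.1]
      =ᵐ[(P₀.withDensity (fun ω => ENNReal.ofReal (Real.exp (X ω * Z ω - ψ₀ (X ω) * T))))]
      fun ω => (∫ x, f x * Real.exp (x * Z ω - ψ₀ x * T) ∂(P₀.map X)) / ∫ x, Real.exp (x * Z ω - ψ₀ x * T) ∂(P₀.map X) := by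
  classical
  have hC0 : 0 ≤ C := le_trans (abs_nonneg _) (hC 0)
  have hZm : Measurable Z := hZG.mono Gs.2 le_rfl
  haveI hμprob : IsProbabilityMeasure (P₀.map X) := Measure.isProbabilityMeasure_map hX.aemeasurable
  have hρm : Measurable (fun ω => Real.exp (X ω * Z ω - ψ₀ (X ω) * T)) :=
    ((hX.mul hZm).sub ((hψ₀.comp hX).mul measurable_const)).exp
  -- identity as a G-measurable map
  have hY : @Measurable Ω Ω m Gs.1 id := measurable_id'' Gs.2
  have hIndepF : @IndepFun Ω Ω ℝ m Gs.1 inferInstance id X P₀ := by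
    have h : Indep Gs.1 (MeasurableSpace.comap X inferInstance) P₀ := hindep.symm
    rw [show Gs.1 = MeasurableSpace.comap id Gs.1 from (MeasurableSpace.comap_id).symm] at h
    exact h
  -- measurable ingredients on products, w.r.t. the sub-σ-algebra on `Ω`
  have hgm2 : Measurable (fun q : ℝ × ℝ => Real.exp (q.2 * q.1 - ψ₀ q.2 * T)) :=
    ((measurable_snd.mul measurable_fst).sub ((hψ₀.comp measurable_snd).mul measurable_const)).exp
  have hgmG : @Measurable (Ω × ℝ) ℝ (MeasurableSpace.prod Gs.1 inferInstance) _
      (fun p : Ω × ℝ => Real.exp (p.2 * Z p.1 - ψ₀ p.2 * T)) :=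
    ((measurable_snd.mul (hZG.comp measurable_fst)).sub
      ((hψ₀.comp measurable_snd).mul measurable_const)).exp
  -- a.e. finiteness of the denominator
  have hLm : Measurable (fun y : ℝ => ∫⁻ x, ENNReal.ofReal (Real.exp (x * y - ψ₀ x * T)) ∂(P₀.map X)) := by
    apply Measurable.lintegral_prod_right'
      (f := fun q : ℝ × ℝ => ENNReal.ofReal (Real.exp (q.2 * q.1 - ψ₀ q.2 * T)))
    exact hgm2.ennreal_ofReal
  have hΦ₀ : @Measurable (Ω × ℝ) ℝ≥0∞ (MeasurableSpace.prod Gs.1 inferInstance) _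
      (fun p : Ω × ℝ => ENNReal.ofReal (Real.exp (p.2 * Z p.1 - ψ₀ p.2 * T))) :=
    hgmG.ennreal_ofReal
  have hfin : ∫⁻ ω, (∫⁻ x, ENNReal.ofReal (Real.exp (x * Z ω - ψ₀ x * T)) ∂(P₀.map X)) ∂(@Measure.map Ω Ω m Gs.1 id P₀) < ⊤ := by
    have hfz := freeze_lintegral_aux (mΩ' := Gs.1) P₀ X id hX hY
      hIndepF (fun p : Ω × ℝ => ENNReal.ofReal (Real.exp (p.2 * Z p.1 - ψ₀ p.2 * T))) hΦ₀
    simp only [id_eq] at hfz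
    rw [← hfz]
    have heq : ∀ ω, ENNReal.ofReal (Real.exp (X ω * Z ω - ψ₀ (X ω) * T)) = (‖Real.exp (X ω * Z ω - ψ₀ (X ω) * T)‖₊ : ℝ≥0∞) :=
      fun ω => (Real.enorm_eq_ofReal (Real.exp_nonneg _)).symm
    calc ∫⁻ ω, ENNReal.ofReal (Real.exp (X ω * Z ω - ψ₀ (X ω) * T)) ∂P₀
        = ∫⁻ ω, (‖Real.exp (X ω * Z ω - ψ₀ (X ω) * T)‖₊ : ℝ≥0∞) ∂P₀ := lintegral_congr heq
      _ < ⊤ := hint.hasFiniteIntegral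
  have haeν : ∀ᵐ ω ∂(@Measure.map Ω Ω m Gs.1 id P₀), (∫⁻ x, ENNReal.ofReal (Real.exp (x * Z ω - ψ₀ x * T)) ∂(P₀.map X)) < ⊤ :=
    ae_lt_top (hLm.comp hZG) hfin.ne
  have haeP₀ : ∀ᵐ ω ∂P₀, (∫⁻ x, ENNReal.ofReal (Real.exp (x * Z ω - ψ₀ x * T)) ∂(P₀.map X)) < ⊤ := by
    have hset : MeasurableSet[Gs.1]
        {ω | (∫⁻ x, ENNReal.ofReal (Real.exp (x * Z ω - ψ₀ x * T)) ∂(P₀.map X)) < ⊤} :=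
      measurableSet_lt (hLm.comp hZG) measurable_const
    have h := freeze_ae_aux (mΩ' := Gs.1) P₀ id hY hset haeν
    simpa only [id_eq] using h
  -- pointwise consequences of the a.e. finiteness
  have key : ∀ y : ℝ, (∫⁻ x, ENNReal.ofReal (Real.exp (x * y - ψ₀ x * T)) ∂(P₀.map X)) < ⊤ →
      Integrable (fun x => Real.exp (x * y - ψ₀ x * T)) (P₀.map X) ∧
      0 < ∫ x, Real.exp (x * y - ψ₀ x * T) ∂(P₀.map X) ∧
      |∫ x, f x * Real.exp (x * y - ψ₀ x * T) ∂(P₀.map X)| ≤ C * ∫ x, Real.exp (x * y - ψ₀ x * T) ∂(P₀.map X) := by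
    intro y hy
    have hmy : Measurable (fun x => Real.exp (x * y - ψ₀ x * T)) :=
      ((measurable_id.mul measurable_const).sub (hψ₀.mul measurable_const)).exp
    have hInt : Integrable (fun x => Real.exp (x * y - ψ₀ x * T)) (P₀.map X) := by
      refine ⟨hmy.aestronglyMeasurable, ?_⟩
      rw [HasFiniteIntegral]
      have heq : ∀ x, ‖Real.exp (x * y - ψ₀ x * T)‖ₑ = ENNReal.ofReal (Real.exp (x * y - ψ₀ x * T)) :=
        fun x => Real.enorm_eq_ofReal (Real.exp_nonneg _)
      rw [lintegral_congr heq]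
      exact hy
    have hD0 : 0 < ∫ x, Real.exp (x * y - ψ₀ x * T) ∂(P₀.map X) := by
      rw [integral_pos_iff_support_of_nonneg (fun x => (Real.exp_pos _).le) hInt]
      have hsupp : Function.support (fun x => Real.exp (x * y - ψ₀ x * T)) = Set.univ :=
        Set.eq_univ_of_forall fun x => (Real.exp_pos _).ne'
      rw [hsupp]
      simp
    have hIntf : Integrable (fun x => f x * Real.exp (x * y - ψ₀ x * T)) (P₀.map X) :=
      hInt.bdd_mul (c := C) hf.aestronglyMeasurable (Filter.Eventually.of_forall fun x => by rw [Real.norm_eq_abs]; exact hC x)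
    refine ⟨hInt, hD0, ?_⟩
    have hIntfa : Integrable (fun x => |f x| * Real.exp (x * y - ψ₀ x * T)) (P₀.map X) :=
      hInt.bdd_mul (c := C) hf.abs.aestronglyMeasurable
        (Filter.Eventually.of_forall fun x => by rw [Real.norm_eq_abs, abs_abs]; exact hC x)
    calc |∫ x, f x * Real.exp (x * y - ψ₀ x * T) ∂(P₀.map X)|
        ≤ ∫ x, |f x| * Real.exp (x * y - ψ₀ x * T) ∂(P₀.map X) := by
          simpa [Real.norm_eq_abs, abs_mul, abs_of_nonneg (Real.exp_nonneg _)] using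
            norm_integral_le_integral_norm (μ := (P₀.map X)) (fun x => f x * Real.exp (x * y - ψ₀ x * T))
      _ ≤ ∫ x, C * Real.exp (x * y - ψ₀ x * T) ∂(P₀.map X) := by
          refine integral_mono hIntfa (hInt.const_mul C) (fun x => ?_)
          exact mul_le_mul_of_nonneg_right (hC x) (Real.exp_nonneg _)
      _ = C * ∫ x, Real.exp (x * y - ψ₀ x * T) ∂(P₀.map X) := integral_const_mul C _
  -- measurability of the candidate conditional expectation
  have hHNsm : StronglyMeasurable (fun y : ℝ => ∫ x, f x * Real.exp (x * y - ψ₀ x * T) ∂(P₀.map X)) := by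
    apply MeasureTheory.StronglyMeasurable.integral_prod_right'
      (f := fun q : ℝ × ℝ => f q.2 * Real.exp (q.2 * q.1 - ψ₀ q.2 * T))
    exact ((hf.comp measurable_snd).mul hgm2).stronglyMeasurable
  have hHDsm : StronglyMeasurable (fun y : ℝ => ∫ x, Real.exp (x * y - ψ₀ x * T) ∂(P₀.map X)) := by
    apply MeasureTheory.StronglyMeasurable.integral_prod_right'
      (f := fun q : ℝ × ℝ => Real.exp (q.2 * q.1 - ψ₀ q.2 * T))
    exact hgm2.stronglyMeasurable
  have hBmG : Measurable[Gs.1] (fun ω => (∫ x, f x * Real.exp (x * Z ω - ψ₀ x * T) ∂(P₀.map X)) / ∫ x, Real.exp (x * Z ω - ψ₀ x * T) ∂(P₀.map X)) :=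
    (hHNsm.measurable.comp hZG).div (hHDsm.measurable.comp hZG)
  have hBsmG : StronglyMeasurable[Gs.1] (fun ω => (∫ x, f x * Real.exp (x * Z ω - ψ₀ x * T) ∂(P₀.map X)) / ∫ x, Real.exp (x * Z ω - ψ₀ x * T) ∂(P₀.map X)) := hBmG.stronglyMeasurable
  have hBboundP₀ : ∀ᵐ ω ∂P₀, ‖(fun ω => (∫ x, f x * Real.exp (x * Z ω - ψ₀ x * T) ∂(P₀.map X)) / ∫ x, Real.exp (x * Z ω - ψ₀ x * T) ∂(P₀.map X)) ω‖ ≤ C := by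
    filter_upwards [haeP₀] with ω hω
    obtain ⟨hi, hd, hn⟩ := key _ hω
    rw [Real.norm_eq_abs]
    show |(∫ x, f x * Real.exp (x * Z ω - ψ₀ x * T) ∂(P₀.map X))
      / ∫ x, Real.exp (x * Z ω - ψ₀ x * T) ∂(P₀.map X)| ≤ C
    rw [abs_div, abs_of_pos hd, div_le_iff₀ hd]
    exact hn
  -- the information measure is finite
  haveI hPfin : IsFiniteMeasure (P₀.withDensity (fun ω => ENNReal.ofReal (Real.exp (X ω * Z ω - ψ₀ (X ω) * T)))) :=
    isFiniteMeasure_withDensity_ofReal hint.hasFiniteIntegral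
  haveI : SigmaFinite ((P₀.withDensity (fun ω => ENNReal.ofReal (Real.exp (X ω * Z ω - ψ₀ (X ω) * T)))).trim Gs.2) := inferInstance
  -- integrability facts
  have hdmeas : Measurable (fun ω => ENNReal.ofReal (Real.exp (X ω * Z ω - ψ₀ (X ω) * T))) := hρm.ennreal_ofReal
  have hdlt : ∀ᵐ ω ∂P₀, ENNReal.ofReal (Real.exp (X ω * Z ω - ψ₀ (X ω) * T)) < ⊤ :=
    Filter.Eventually.of_forall fun ω => ENNReal.ofReal_lt_top
  have hfXρ : Integrable (fun ω => f (X ω) * Real.exp (X ω * Z ω - ψ₀ (X ω) * T)) P₀ :=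
    hint.bdd_mul (c := C) (hf.comp hX).aestronglyMeasurable
      (Filter.Eventually.of_forall fun ω => by rw [Real.norm_eq_abs]; exact hC _)
  have hfXP : Integrable (fun ω => f (X ω)) (P₀.withDensity (fun ω => ENNReal.ofReal (Real.exp (X ω * Z ω - ψ₀ (X ω) * T)))) := by
    rw [integrable_withDensity_iff hdmeas hdlt]
    have heq : (fun ω => f (X ω) * (ENNReal.ofReal (Real.exp (X ω * Z ω - ψ₀ (X ω) * T))).toReal)
        = fun ω => f (X ω) * Real.exp (X ω * Z ω - ψ₀ (X ω) * T) := by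
      funext ω
      rw [ENNReal.toReal_ofReal (Real.exp_nonneg _)]
    rw [heq]
    exact hfXρ
  have hBρ : Integrable (fun ω => (fun ω => (∫ x, f x * Real.exp (x * Z ω - ψ₀ x * T) ∂(P₀.map X)) / ∫ x, Real.exp (x * Z ω - ψ₀ x * T) ∂(P₀.map X)) ω * Real.exp (X ω * Z ω - ψ₀ (X ω) * T)) P₀ :=
    hint.bdd_mul ((hBsmG.mono Gs.2).aestronglyMeasurable) hBboundP₀
  have hBP : Integrable (fun ω => (∫ x, f x * Real.exp (x * Z ω - ψ₀ x * T) ∂(P₀.map X)) / ∫ x, Real.exp (x * Z ω - ψ₀ x * T) ∂(P₀.map X)) (P₀.withDensity (fun ω => ENNReal.ofReal (Real.exp (X ω * Z ω - ψ₀ (X ω) * T)))) := by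
    rw [integrable_withDensity_iff hdmeas hdlt]
    have heq : (fun ω => (fun ω => (∫ x, f x * Real.exp (x * Z ω - ψ₀ x * T) ∂(P₀.map X)) / ∫ x, Real.exp (x * Z ω - ψ₀ x * T) ∂(P₀.map X)) ω * (ENNReal.ofReal (Real.exp (X ω * Z ω - ψ₀ (X ω) * T))).toReal)
        = fun ω => (fun ω => (∫ x, f x * Real.exp (x * Z ω - ψ₀ x * T) ∂(P₀.map X)) / ∫ x, Real.exp (x * Z ω - ψ₀ x * T) ∂(P₀.map X)) ω * Real.exp (X ω * Z ω - ψ₀ (X ω) * T) := by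
      funext ω
      rw [ENNReal.toReal_ofReal (Real.exp_nonneg _)]
    rw [heq]
    exact hBρ
  -- the defining set-integral identity
  have hseteq : ∀ s : Set Ω, MeasurableSet[Gs.1] s → (P₀.withDensity (fun ω => ENNReal.ofReal (Real.exp (X ω * Z ω - ψ₀ (X ω) * T)))) s < ⊤ →
      ∫ ω in s, (fun ω => (∫ x, f x * Real.exp (x * Z ω - ψ₀ x * T) ∂(P₀.map X)) / ∫ x, Real.exp (x * Z ω - ψ₀ x * T) ∂(P₀.map X)) ω ∂(P₀.withDensity (fun ω => ENNReal.ofReal (Real.exp (X ω * Z ω - ψ₀ (X ω) * T)))) = ∫ ω in s, f (X ω) ∂(P₀.withDensity (fun ω => ENNReal.ofReal (Real.exp (X ω * Z ω - ψ₀ (X ω) * T)))) := by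
    intro s hs _
    have hsm : MeasurableSet s := Gs.2 s hs
    have hindm : Measurable[Gs.1] (s.indicator (fun _ => (1:ℝ))) := measurable_const.indicator hs
    have hindm' : Measurable (s.indicator (fun _ => (1:ℝ))) := hindm.mono Gs.2 le_rfl
    have hPalt : (P₀.withDensity (fun ω => ENNReal.ofReal (Real.exp (X ω * Z ω - ψ₀ (X ω) * T)))) = P₀.withDensity
        (fun ω => ((Real.toNNReal (Real.exp (X ω * Z ω - ψ₀ (X ω) * T)) : ℝ≥0) : ℝ≥0∞)) := rfl
    -- express both sides as `P₀`-integrals against the density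
    have hleft : ∫ ω in s, (fun ω => (∫ x, f x * Real.exp (x * Z ω - ψ₀ x * T) ∂(P₀.map X)) / ∫ x, Real.exp (x * Z ω - ψ₀ x * T) ∂(P₀.map X)) ω ∂(P₀.withDensity (fun ω => ENNReal.ofReal (Real.exp (X ω * Z ω - ψ₀ (X ω) * T))))
        = ∫ ω, (s.indicator (fun _ => (1:ℝ))) ω * ((fun ω => (∫ x, f x * Real.exp (x * Z ω - ψ₀ x * T) ∂(P₀.map X)) / ∫ x, Real.exp (x * Z ω - ψ₀ x * T) ∂(P₀.map X)) ω * Real.exp (X ω * Z ω - ψ₀ (X ω) * T)) ∂P₀ := by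
      rw [hPalt, setIntegral_withDensity_eq_setIntegral_smul
        (f := fun ω => Real.toNNReal (Real.exp (X ω * Z ω - ψ₀ (X ω) * T))) hρm.real_toNNReal _ hsm,
        ← integral_indicator hsm]
      congr 1
      funext ω
      by_cases hω : ω ∈ s
      · simp only [Set.indicator_of_mem hω, NNReal.smul_def,
          Real.coe_toNNReal _ (Real.exp_nonneg _), smul_eq_mul, one_mul]
        ring
      · simp [Set.indicator_of_notMem hω]
    have hright : ∫ ω in s, f (X ω) ∂(P₀.withDensity (fun ω => ENNReal.ofReal (Real.exp (X ω * Z ω - ψ₀ (X ω) * T))))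
        = ∫ ω, (s.indicator (fun _ => (1:ℝ))) ω * (f (X ω) * Real.exp (X ω * Z ω - ψ₀ (X ω) * T)) ∂P₀ := by
      rw [hPalt, setIntegral_withDensity_eq_setIntegral_smul
        (f := fun ω => Real.toNNReal (Real.exp (X ω * Z ω - ψ₀ (X ω) * T))) hρm.real_toNNReal _ hsm,
        ← integral_indicator hsm]
      congr 1
      funext ω
      by_cases hω : ω ∈ s
      · simp only [Set.indicator_of_mem hω, NNReal.smul_def,
          Real.coe_toNNReal _ (Real.exp_nonneg _), smul_eq_mul, one_mul]
        ring
      · simp [Set.indicator_of_notMem hω]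
    -- freeze both `P₀`-integrals
    have hfzB : ∫ ω, (s.indicator (fun _ => (1:ℝ))) ω * ((fun ω => (∫ x, f x * Real.exp (x * Z ω - ψ₀ x * T) ∂(P₀.map X)) / ∫ x, Real.exp (x * Z ω - ψ₀ x * T) ∂(P₀.map X)) ω * Real.exp (X ω * Z ω - ψ₀ (X ω) * T)) ∂P₀
        = ∫ ω', (s.indicator (fun _ => (1:ℝ))) ω' * ((fun ω => (∫ x, f x * Real.exp (x * Z ω - ψ₀ x * T) ∂(P₀.map X)) / ∫ x, Real.exp (x * Z ω - ψ₀ x * T) ∂(P₀.map X)) ω' * ∫ x, Real.exp (x * Z ω' - ψ₀ x * T) ∂(P₀.map X)) ∂(@Measure.map Ω Ω m Gs.1 id P₀) := by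
      have hΦm : @StronglyMeasurable (Ω × ℝ) ℝ _ (MeasurableSpace.prod Gs.1 inferInstance)
          (fun p : Ω × ℝ => (s.indicator (fun _ => (1:ℝ))) p.1 *
            ((fun ω => (∫ x, f x * Real.exp (x * Z ω - ψ₀ x * T) ∂(P₀.map X)) / ∫ x, Real.exp (x * Z ω - ψ₀ x * T) ∂(P₀.map X)) p.1 * Real.exp (p.2 * Z p.1 - ψ₀ p.2 * T))) := by
        apply Measurable.stronglyMeasurable
        exact (hindm.comp measurable_fst).mul ((hBmG.comp measurable_fst).mul hgmG)
      have hΦint : Integrable (fun ω => (s.indicator (fun _ => (1:ℝ))) ω * ((fun ω => (∫ x, f x * Real.exp (x * Z ω - ψ₀ x * T) ∂(P₀.map X)) / ∫ x, Real.exp (x * Z ω - ψ₀ x * T) ∂(P₀.map X)) ω * Real.exp (X ω * Z ω - ψ₀ (X ω) * T))) P₀ := by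
        have heq : (fun ω => (s.indicator (fun _ => (1:ℝ))) ω * ((fun ω => (∫ x, f x * Real.exp (x * Z ω - ψ₀ x * T) ∂(P₀.map X)) / ∫ x, Real.exp (x * Z ω - ψ₀ x * T) ∂(P₀.map X)) ω * Real.exp (X ω * Z ω - ψ₀ (X ω) * T)))
            = fun ω => ((s.indicator (fun _ => (1:ℝ))) ω * (fun ω => (∫ x, f x * Real.exp (x * Z ω - ψ₀ x * T) ∂(P₀.map X)) / ∫ x, Real.exp (x * Z ω - ψ₀ x * T) ∂(P₀.map X)) ω) * Real.exp (X ω * Z ω - ψ₀ (X ω) * T) := by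
          funext ω; ring
        rw [heq]
        refine hint.bdd_mul (c := C) ?_ ?_
        · exact (hindm'.aestronglyMeasurable).mul ((hBsmG.mono Gs.2).aestronglyMeasurable)
        · filter_upwards [hBboundP₀] with ω hω
          rw [norm_mul]
          by_cases hωs : ω ∈ s
          · simp only [Set.indicator_of_mem hωs, norm_one, one_mul]
            exact hω
          · simp only [Set.indicator_of_notMem hωs, norm_zero, zero_mul]
            exact hC0
      have hfz := freeze_integral_aux (mΩ' := Gs.1) P₀ X id hX hY
        hIndepF (fun p : Ω × ℝ => (s.indicator (fun _ => (1:ℝ))) p.1 *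
          ((fun ω => (∫ x, f x * Real.exp (x * Z ω - ψ₀ x * T) ∂(P₀.map X)) / ∫ x, Real.exp (x * Z ω - ψ₀ x * T) ∂(P₀.map X)) p.1 * Real.exp (p.2 * Z p.1 - ψ₀ p.2 * T))) hΦm
        (by simpa only [id_eq] using hΦint)
      simp only [id_eq] at hfz
      rw [hfz]
      congr 1
      funext ω'
      rw [integral_const_mul, integral_const_mul]
    have hfzf : ∫ ω, (s.indicator (fun _ => (1:ℝ))) ω * (f (X ω) * Real.exp (X ω * Z ω - ψ₀ (X ω) * T)) ∂P₀
        = ∫ ω', (s.indicator (fun _ => (1:ℝ))) ω' * (∫ x, f x * Real.exp (x * Z ω' - ψ₀ x * T) ∂(P₀.map X)) ∂(@Measure.map Ω Ω m Gs.1 id P₀) := by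
      have hΦm : @StronglyMeasurable (Ω × ℝ) ℝ _ (MeasurableSpace.prod Gs.1 inferInstance)
          (fun p : Ω × ℝ => (s.indicator (fun _ => (1:ℝ))) p.1 *
            (f p.2 * Real.exp (p.2 * Z p.1 - ψ₀ p.2 * T))) := by
        apply Measurable.stronglyMeasurable
        exact (hindm.comp measurable_fst).mul ((hf.comp measurable_snd).mul hgmG)
      have hΦint : Integrable (fun ω => (s.indicator (fun _ => (1:ℝ))) ω * (f (X ω) * Real.exp (X ω * Z ω - ψ₀ (X ω) * T))) P₀ := by
        have heq : (fun ω => (s.indicator (fun _ => (1:ℝ))) ω * (f (X ω) * Real.exp (X ω * Z ω - ψ₀ (X ω) * T)))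
            = fun ω => ((s.indicator (fun _ => (1:ℝ))) ω * f (X ω)) * Real.exp (X ω * Z ω - ψ₀ (X ω) * T) := by
          funext ω; ring
        rw [heq]
        refine hint.bdd_mul (c := C) ?_ ?_
        · exact (hindm'.aestronglyMeasurable).mul (hf.comp hX).aestronglyMeasurable
        · refine Filter.Eventually.of_forall fun ω => ?_
          rw [norm_mul]
          by_cases hωs : ω ∈ s
          · simp only [Set.indicator_of_mem hωs, norm_one, one_mul, Real.norm_eq_abs]
            exact hC _
          · simp only [Set.indicator_of_notMem hωs, norm_zero, zero_mul]
            exact hC0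
      have hfz := freeze_integral_aux (mΩ' := Gs.1) P₀ X id hX hY
        hIndepF (fun p : Ω × ℝ => (s.indicator (fun _ => (1:ℝ))) p.1 *
          (f p.2 * Real.exp (p.2 * Z p.1 - ψ₀ p.2 * T))) hΦm
        (by simpa only [id_eq] using hΦint)
      simp only [id_eq] at hfz
      rw [hfz]
      congr 1
      funext ω'
      rw [integral_const_mul]
    -- identify the two `ν`-integrands a.e.
    have hae : ∫ ω', (s.indicator (fun _ => (1:ℝ))) ω' * ((fun ω => (∫ x, f x * Real.exp (x * Z ω - ψ₀ x * T) ∂(P₀.map X)) / ∫ x, Real.exp (x * Z ω - ψ₀ x * T) ∂(P₀.map X)) ω' * ∫ x, Real.exp (x * Z ω' - ψ₀ x * T) ∂(P₀.map X)) ∂(@Measure.map Ω Ω m Gs.1 id P₀)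
        = ∫ ω', (s.indicator (fun _ => (1:ℝ))) ω' * (∫ x, f x * Real.exp (x * Z ω' - ψ₀ x * T) ∂(P₀.map X)) ∂(@Measure.map Ω Ω m Gs.1 id P₀) := by
      refine integral_congr_ae ?_
      filter_upwards [haeν] with ω hω
      obtain ⟨hi, hd, _⟩ := key _ hω
      show s.indicator (fun _ => (1:ℝ)) ω *
          ((∫ x, f x * Real.exp (x * Z ω - ψ₀ x * T) ∂(P₀.map X))
            / (∫ x, Real.exp (x * Z ω - ψ₀ x * T) ∂(P₀.map X))
            * ∫ x, Real.exp (x * Z ω - ψ₀ x * T) ∂(P₀.map X))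
        = s.indicator (fun _ => (1:ℝ)) ω * ∫ x, f x * Real.exp (x * Z ω - ψ₀ x * T) ∂(P₀.map X)
      rw [div_mul_cancel₀ _ hd.ne']
    rw [hleft, hright, hfzB, hfzf, hae]
  -- conclude by uniqueness of the conditional expectation
  exact Filter.EventuallyEq.symm
    (ae_eq_condExp_of_forall_setIntegral_eq Gs.2 hfXP
      (fun s hs hμs => hBP.integrableOn) hseteq (hBsmG.aestronglyMeasurable))

/-- Bayes formula for Lévy information: if X has a priori distribution π,
then the conditional distribution of X given F_t under the information measure
P = exp(Xξ_t − ψ₀(X)t)·P₀ is π_t(dx) = exp(xξ_t − ψ₀(x)t) π(dx) / ∫ exp(yξ_t − ψ₀(y)t) π(dy),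
stated as an identity of conditional expectations for bounded measurable test functions. -/
theorem levy_information_bayes
    {Ω : Type*} [m : MeasurableSpace Ω] (P₀ : Measure Ω) [IsProbabilityMeasure P₀]
    (ξ : ℝ≥0 → Ω → ℝ) (hξm : ∀ t, StronglyMeasurable (ξ t))
    (X : Ω → ℝ) (hX : Measurable X)
    (ψ₀ : ℝ → ℝ) (hψ₀ : Measurable ψ₀)
    (t : ℝ≥0)
    -- X is independent of the process ξ up to time t under P₀
    (hindep : Indep (MeasurableSpace.comap X inferInstance)
      (MeasureTheory.Filtration.natural ξ hξm t) P₀)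
    -- integrability of the change-of-measure density
    (hint : Integrable (fun ω => Real.exp (X ω * ξ t ω - ψ₀ (X ω) * t)) P₀)
    (f : ℝ → ℝ) (hf : Measurable f) (hfb : ∃ C, ∀ x, |f x| ≤ C) :
    (P₀.withDensity
        (fun ω => ENNReal.ofReal (Real.exp (X ω * ξ t ω - ψ₀ (X ω) * t))))[
      (fun ω => f (X ω)) | MeasureTheory.Filtration.natural ξ hξm t]
      =ᵐ[P₀.withDensity
        (fun ω => ENNReal.ofReal (Real.exp (X ω * ξ t ω - ψ₀ (X ω) * t)))]
      fun ω =>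
        (∫ x, f x * Real.exp (x * ξ t ω - ψ₀ x * t) ∂(P₀.map X))
          / ∫ x, Real.exp (x * ξ t ω - ψ₀ x * t) ∂(P₀.map X) := by
  obtain ⟨C, hC⟩ := hfb
  exact levy_information_bayes_core P₀
    ⟨MeasureTheory.Filtration.natural ξ hξm t, (MeasureTheory.Filtration.natural ξ hξm).le t⟩
    X hX (ξ t)
    ((MeasureTheory.Filtration.stronglyAdapted_natural hξm t).measurable)
    ψ₀ hψ₀ (t : ℝ) hindep hint f hf C hC
end

section
/- Gamma information: let γ be a standard gamma process with rate m (E[exp(αγ_t)] = (1−α)^{−mt} for Re α < 1), and X an independent random variable with X < 1 a.s. Then ξ_t = γ_t/(1−X) satisfies E[exp(αξ_t)|X] = exp((ψ₀(α+X) − ψ₀(X))t) for purely imaginary α, where ψ₀(α) = −m ln(1−α); this reduces to the identity −m ln(1 − α/(1−X)) = −m ln(1−(X+α)) + m ln(1−X). -/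
open MeasureTheory ProbabilityTheory Real NNReal

lemma loglem (x : ℝ) (hx : x < 1) (α : ℂ) (hα : α.re = 0) :
    Complex.log (1 - α / (1 - (x:ℂ))) =
      Complex.log (1 - (α + (x:ℂ))) - Complex.log (1 - (x:ℂ)) := by
  have hr : (0:ℝ) < 1 - x := by linarith
  have hz1re : (1 - (α + (x:ℂ))).re = 1 - x := by simp [hα]
  have hz1 : (1 - (α + (x:ℂ))) ≠ 0 := by
    intro h; rw [h] at hz1re; simp at hz1re; linarith
  have hq : 1 - α / (1 - (x:ℂ)) = (1 - (α + (x:ℂ))) / (((1 - x : ℝ)):ℂ) := by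
    have : ((1:ℂ) - (x:ℂ)) ≠ 0 := by
      intro h
      have := congrArg Complex.re h
      simp at this; linarith
    push_cast
    rw [eq_div_iff this, sub_mul, div_mul_cancel₀ _ this]
    ring
  have habs : ‖((1 - (α + (x:ℂ))) / (((1 - x : ℝ)):ℂ))‖
      = ‖(1 - (α + (x:ℂ)))‖ / (1 - x) := by
    rw [norm_div, Complex.norm_real, Real.norm_eq_abs, abs_of_pos hr]
  have harg : Complex.arg ((1 - (α + (x:ℂ))) / (((1 - x : ℝ)):ℂ))
      = Complex.arg (1 - (α + (x:ℂ))) := by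
    rw [div_eq_mul_inv, ← Complex.ofReal_inv, mul_comm]
    exact Complex.arg_real_mul _ (inv_pos.mpr hr)
  have hlogr : Complex.log (1 - (x:ℂ)) = ((Real.log (1 - x) : ℝ) : ℂ) := by
    rw [← Complex.ofReal_one, ← Complex.ofReal_sub, ← Complex.ofReal_log hr.le]
  have habs0 : ‖(1 - (α + (x:ℂ)))‖ ≠ 0 :=
    norm_ne_zero_iff.mpr hz1
  rw [hq, Complex.log, habs, harg, Complex.log, hlogr,
    Real.log_div habs0 hr.ne']
  push_cast
  ring

lemma powlem (m t : ℝ) (x : ℝ) (hx : x < 1) (α : ℂ) (hα : α.re = 0) :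
    ((1:ℂ) - α / (1 - (x:ℂ))) ^ ((-(m*t) : ℝ) : ℂ)
      = Complex.exp ((((-m:ℂ) * Complex.log (1 - (α + (x:ℂ))))
          - ((-m:ℂ) * Complex.log (1 - (x:ℂ)))) * ((t : ℝ) : ℂ)) := by
  have hr : (0:ℝ) < 1 - x := by linarith
  have hqne : (1:ℂ) - α / (1 - (x:ℂ)) ≠ 0 := by
    intro h
    have hre : ((1:ℂ) - α / (1 - (x:ℂ))).re = 1 := by
      have : ((1:ℂ) - (x:ℂ)) = (((1 - x : ℝ)):ℂ) := by push_cast; ring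
      have h2 : (α / (((1 - x : ℝ)):ℂ)).re = 0 := by
        rw [Complex.div_ofReal_re, hα, zero_div]
      rw [this, Complex.sub_re, Complex.one_re, h2, sub_zero]
    rw [h] at hre; simp at hre
  rw [Complex.cpow_def_of_ne_zero hqne, loglem x hx α hα]
  congr 1
  push_cast
  ring

/-- Gamma information: let γ be a standard gamma process with rate m and
X independent with X < 1 a.s.  Then ξ_t = γ_t/(1−X) has conditional exponent
ψ₀(α+X) − ψ₀(X) where ψ₀(α) = −m ln(1−α); this reduces to the identity
−m ln(1 − α/(1−x)) = −m ln(1−(x+α)) + m ln(1−x). -/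
theorem gamma_information
    {Ω : Type*} [mΩ : MeasurableSpace Ω] (P : Measure Ω) [IsProbabilityMeasure P]
    (m : ℝ) (hm : 0 < m)
    (γ : ℝ≥0 → Ω → ℝ) (hγm : ∀ t, Measurable (γ t))
    -- standard gamma process with rate m: E[exp(α γ_t)] = (1−α)^{−mt} for Re α < 1
    (hmgf : ∀ (α : ℂ), α.re < 1 → ∀ t : ℝ≥0,
      Integrable (fun ω => Complex.exp (α * (γ t ω : ℂ))) P ∧
      ∫ ω, Complex.exp (α * (γ t ω : ℂ)) ∂P = ((1 : ℂ) - α) ^ ((-(m * t) : ℝ) : ℂ))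
    (X : Ω → ℝ) (hX : Measurable X) (hX1 : ∀ᵐ ω ∂P, X ω < 1)
    -- X is independent of the gamma process
    (hindep : Indep (MeasurableSpace.comap X inferInstance)
      (⨆ t : ℝ≥0, MeasurableSpace.comap (γ t) inferInstance) P)
    (ξ : ℝ≥0 → Ω → ℝ) (hξ : ∀ t ω, ξ t ω = γ t ω / (1 - X ω)) :
    -- conditional exponent ψ₀(α+X) − ψ₀(X), with ψ₀(w) = −m log(1−w)
    (∀ (α : ℂ), α.re = 0 → ∀ t : ℝ≥0,
      P[(fun ω => Complex.exp (α * (ξ t ω : ℂ))) | MeasurableSpace.comap X inferInstance]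
        =ᵐ[P] fun ω =>
          Complex.exp ((((-m : ℂ) * Complex.log (1 - (α + (X ω : ℂ))))
            - ((-m : ℂ) * Complex.log (1 - (X ω : ℂ)))) * ((t : ℝ) : ℂ)))
    -- the reduction identity
    ∧ (∀ x α : ℝ, x < 1 → x + α < 1 →
        -m * Real.log (1 - α / (1 - x))
          = -m * Real.log (1 - (x + α)) + m * Real.log (1 - x)) := by
  constructor
  · intro α hα t
    have hle : MeasurableSpace.comap X inferInstance ≤ mΩ := hX.comap_le
    set G : ℝ → ℂ := fun x =>
      Complex.exp ((((-m : ℂ) * Complex.log (1 - (α + (x : ℂ))))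
        - ((-m : ℂ) * Complex.log (1 - (x : ℂ)))) * ((t : ℝ) : ℂ)) with hG
    have hGm : Measurable G := by
      apply Measurable.cexp
      apply Measurable.mul _ measurable_const
      exact (measurable_const.mul
        ((measurable_const.sub (measurable_const.add Complex.measurable_ofReal)).clog)).sub
        (measurable_const.mul ((measurable_const.sub Complex.measurable_ofReal).clog))
    have hξm : Measurable[mΩ] (ξ t) := by
      have : ξ t = fun ω => γ t ω / (1 - X ω) := funext (hξ t)
      rw [this]; exact (hγm t).div (measurable_const.sub hX)
    set f : Ω → ℂ := fun ω => Complex.exp (α * (ξ t ω : ℂ)) with hfdef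
    have hfm : Measurable[mΩ] f :=
      (measurable_const.mul (Complex.measurable_ofReal.comp hξm)).cexp
    have hfabs : ∀ ω, ‖f ω‖ = 1 := by
      intro ω
      rw [hfdef]
      simp only [Complex.norm_exp]
      have : (α * ((ξ t ω : ℝ) : ℂ)).re = 0 := by
        rw [Complex.mul_re, hα, Complex.ofReal_im, Complex.ofReal_re]
        ring
      rw [this, Real.exp_zero]
    have hfint : Integrable f P := by
      refine Integrable.mono' (integrable_const 1) (hfm.aestronglyMeasurable (μ := P)) ?_
      exact Filter.Eventually.of_forall fun ω => le_of_eq (hfabs ω)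
    -- bound on G
    have hGbound : ∀ x : ℝ, x < 1 → ‖G x‖ ≤ 1 := by
      intro x hx
      have hr : (0:ℝ) < 1 - x := by linarith
      rw [hG]
      simp only [Complex.norm_exp]
      rw [Real.exp_le_one_iff]
      have hre : ((((-m : ℂ) * Complex.log (1 - (α + (x : ℂ))))
          - ((-m : ℂ) * Complex.log (1 - (x : ℂ)))) * ((t : ℝ) : ℂ)).re
          = ((-m) * Real.log ‖(1 - (α + (x:ℂ)))‖
              + m * Real.log (1 - x)) * (t : ℝ) := by
        have h1 : ((-m : ℂ)).im = 0 := by simp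
        have hlr : (Complex.log (1 - (α + (x:ℂ)))).re
            = Real.log ‖(1 - (α + (x:ℂ)))‖ := Complex.log_re _
        have hl2 : Complex.log (1 - (x:ℂ)) = ((Real.log (1 - x) : ℝ) : ℂ) := by
          rw [← Complex.ofReal_one, ← Complex.ofReal_sub, ← Complex.ofReal_log hr.le]
        rw [Complex.mul_re, Complex.ofReal_im, Complex.ofReal_re, hl2]
        simp only [Complex.sub_re, Complex.mul_re, Complex.ofReal_re, Complex.ofReal_im,
          Complex.neg_re, Complex.neg_im, Complex.ofReal_re]
        rw [hlr]
        simp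
      rw [hre]
      have hA : 1 - x ≤ ‖(1 - (α + (x:ℂ)))‖ := by
        have : (1 - (α + (x:ℂ))).re = 1 - x := by simp [hα]
        calc 1 - x = (1 - (α + (x:ℂ))).re := this.symm
          _ ≤ |(1 - (α + (x:ℂ))).re| := le_abs_self _
          _ ≤ ‖(1 - (α + (x:ℂ)))‖ := Complex.abs_re_le_norm _
      have hlog : Real.log (1 - x) ≤ Real.log ‖(1 - (α + (x:ℂ)))‖ :=
        Real.log_le_log hr hA
      have ht : (0:ℝ) ≤ (t:ℝ) := t.coe_nonneg
      have hneg : -m * Real.log ‖(1 - (α + (x:ℂ)))‖ + m * Real.log (1 - x) ≤ 0 := by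
        nlinarith
      exact mul_nonpos_of_nonpos_of_nonneg hneg ht
    set g : Ω → ℂ := fun ω => G (X ω) with hgdef
    have hgbound : ∀ᵐ ω ∂P, ‖g ω‖ ≤ 1 := by
      filter_upwards [hX1] with ω hω
      exact hGbound (X ω) hω
    have hgm : Measurable[mΩ] g := hGm.comp hX
    have hgint : Integrable g P :=
      Integrable.mono' (integrable_const 1) (hgm.aestronglyMeasurable (μ := P)) hgbound
    have hXmX : Measurable[MeasurableSpace.comap X inferInstance] X := Measurable.of_comap_le le_rfl
    have hgmeas' : AEStronglyMeasurable[MeasurableSpace.comap X inferInstance] g P :=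
      StronglyMeasurable.aestronglyMeasurable
        ((hGm.comp hXmX).stronglyMeasurable)
    -- independence
    have hIF : IndepFun X (γ t) P :=
      indep_of_indep_of_le_right hindep
        (le_iSup (fun u : ℝ≥0 => MeasurableSpace.comap (γ u) inferInstance) t)
    have hmap : P.map (fun ω => (X ω, γ t ω)) = (P.map X).prod (P.map (γ t)) :=
      (indepFun_iff_map_prod_eq_prod_map_map hX.aemeasurable (hγm t).aemeasurable).mp hIF
    have haem : ∀ᵐ x ∂(P.map X), x < 1 := by
      rw [ae_map_iff hX.aemeasurable]
      · exact hX1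
      · exact measurableSet_Iio
    refine (ae_eq_condExp_of_forall_setIntegral_eq hle hfint
      (fun s _ _ => hgint.integrableOn) ?_ hgmeas').symm
    rintro s ⟨B, hB, rfl⟩ -
    set F : ℝ × ℝ → ℂ := fun p =>
      Set.indicator B (fun _ => (1:ℂ)) p.1 * Complex.exp (α / (1 - (p.1:ℂ)) * (p.2:ℂ))
      with hF
    have hFm : Measurable F := by
      apply Measurable.mul
      · exact (measurable_const.indicator hB).comp measurable_fst
      · exact (((measurable_const.div
          ((measurable_const.sub (Complex.measurable_ofReal.comp measurable_fst)))).mul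
          (Complex.measurable_ofReal.comp measurable_snd)).cexp)
    have hFbound : ∀ p : ℝ × ℝ, ‖F p‖ ≤ 1 := by
      rintro ⟨x, y⟩
      rw [hF]
      have h2 : (α / (1 - (x:ℂ)) * (y:ℂ)).re = 0 := by
        have : ((1:ℂ) - (x:ℂ)) = (((1 - x : ℝ)):ℂ) := by push_cast; ring
        rw [Complex.mul_re, this, Complex.div_ofReal_re, Complex.ofReal_im, hα, zero_div]
        ring
      simp only [norm_mul, Complex.norm_exp, h2, Real.exp_zero, mul_one]
      rcases Set.indicator_eq_zero_or_self B (fun _ => (1:ℂ)) x with h | h <;> rw [h] <;> simp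
    have hFint : Integrable F ((P.map X).prod (P.map (γ t))) := by
      refine Integrable.mono' (integrable_const 1) hFm.aestronglyMeasurable ?_
      exact Filter.Eventually.of_forall hFbound
    -- step 1: LHS f-integral as integral of F ∘ (X, γ t)
    have step1 : ∫ ω in X ⁻¹' B, f ω ∂P = ∫ ω, F (X ω, γ t ω) ∂P := by
      rw [← integral_indicator (hX hB)]
      apply integral_congr_ae
      apply Filter.Eventually.of_forall
      intro ω
      by_cases hω : ω ∈ X ⁻¹' B
      · rw [Set.indicator_of_mem hω, hF]
        simp only
        rw [Set.indicator_of_mem (show X ω ∈ B from hω), one_mul, hfdef]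
        simp only
        congr 1
        rw [hξ t ω]
        push_cast
        ring
      · rw [Set.indicator_of_notMem hω, hF]
        simp only
        rw [Set.indicator_of_notMem (show X ω ∉ B from hω), zero_mul]
    have step2 : ∫ ω, F (X ω, γ t ω) ∂P
        = ∫ p, F p ∂((P.map X).prod (P.map (γ t))) := by
      rw [← hmap, integral_map (hX.prodMk (hγm t)).aemeasurable hFm.aestronglyMeasurable]
    have step3 : ∫ p, F p ∂((P.map X).prod (P.map (γ t)))
        = ∫ x, ∫ y, F (x, y) ∂(P.map (γ t)) ∂(P.map X) := integral_prod F hFint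
    have step4 : ∀ x : ℝ, ∫ y, F (x, y) ∂(P.map (γ t))
        = Set.indicator B (fun _ => (1:ℂ)) x
            * (((1:ℂ) - α / (1 - (x:ℂ))) ^ ((-(m * t) : ℝ) : ℂ)) := by
      intro x
      have hre : (α / (1 - (x:ℂ))).re = 0 := by
        have : ((1:ℂ) - (x:ℂ)) = (((1 - x : ℝ)):ℂ) := by push_cast; ring
        rw [this, Complex.div_ofReal_re, hα, zero_div]
      have hre1 : (α / (1 - (x:ℂ))).re < 1 := by rw [hre]; norm_num
      have hinner : ∫ y : ℝ, Complex.exp (α / (1 - (x:ℂ)) * (y:ℂ)) ∂(P.map (γ t))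
          = ((1:ℂ) - α / (1 - (x:ℂ))) ^ ((-(m * t) : ℝ) : ℂ) := by
        rw [integral_map (hγm t).aemeasurable (f := fun y : ℝ => Complex.exp (α / (1 - (x:ℂ)) * (y:ℂ)))
          ((measurable_const.mul Complex.measurable_ofReal).cexp).aestronglyMeasurable]
        exact (hmgf _ hre1 t).2
      simp only [hF]
      rw [integral_const_mul, hinner]
    have step5 : ∫ x, ∫ y, F (x, y) ∂(P.map (γ t)) ∂(P.map X)
        = ∫ x, Set.indicator B (fun _ => (1:ℂ)) x * G x ∂(P.map X) := by
      apply integral_congr_ae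
      filter_upwards [haem] with x hx
      rw [step4 x, hG]
      congr 1
      exact powlem m t x hx α hα
    have step6 : ∫ x, Set.indicator B (fun _ => (1:ℂ)) x * G x ∂(P.map X)
        = ∫ ω in X ⁻¹' B, g ω ∂P := by
      rw [integral_map hX.aemeasurable (f := fun x : ℝ => Set.indicator B (fun _ => (1:ℂ)) x * G x)
        (((measurable_const.indicator hB).mul hGm).aestronglyMeasurable),
        ← integral_indicator (hX hB)]
      apply integral_congr_ae
      apply Filter.Eventually.of_forall
      intro ω
      by_cases hω : ω ∈ X ⁻¹' B
      · rw [Set.indicator_of_mem hω]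
        simp only
        rw [Set.indicator_of_mem (show X ω ∈ B from hω), one_mul]
      · rw [Set.indicator_of_notMem hω]
        simp only
        rw [Set.indicator_of_notMem (show X ω ∉ B from hω), zero_mul]
    rw [step1, step2, step3, step5, step6]
  · intro x α hx hxα
    have h1 : (0:ℝ) < 1 - x := by linarith
    have h2 : (0:ℝ) < 1 - (x + α) := by linarith
    have hq : 1 - α / (1 - x) = (1 - (x + α)) / (1 - x) := by
      field_simp
      ring
    rw [hq, Real.log_div h2.ne' h1.ne']
    ring
end

section
/- Linear gamma filter: let X = 1 − U where U is gamma-distributed with shape r > 1 and rate θ > 0, and let ξ_t be a gamma information process with rate m and message X. Then with Y = m/(1−X), the conditional expectation is E[Y | F_t] = (ξ_t + θ)/(t + τ) where τ = (r−1)/m; equivalently, the Bayes posterior integral identity ∫ (m/(1−x)) (1−x)^{mt} e^{xξ_t} π(dx) / ∫ (1−x)^{mt} e^{xξ_t} π(dx) = (ξ_t + θ)/(t + (r−1)/m) holds, where π is the law of X. -/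
open MeasureTheory ProbabilityTheory Real
open Set

lemma gamma_map_aux (r θ ξ p : ℝ) (hr : 0 < r) (hθ : 0 < θ) (hb : 0 < θ + ξ)
    (hp : 0 < p + r) :
    ∫ x, (1 - x) ^ p * Real.exp (x * ξ)
        ∂((gammaMeasure r θ).map (fun u => 1 - u))
      = Real.exp ξ * (θ ^ r / Real.Gamma r) *
        ((1 / (θ + ξ)) ^ (p + r) * Real.Gamma (p + r)) := by
  have hmeas : Measurable fun u : ℝ => 1 - u := measurable_const.sub measurable_id
  have hg : Measurable fun x : ℝ => (1 - x) ^ p * Real.exp (x * ξ) :=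
    ((measurable_const.sub measurable_id).pow_const p |>.mul
      ((measurable_id.mul_const ξ).exp))
  rw [integral_map hmeas.aemeasurable hg.aestronglyMeasurable]
  simp only [sub_sub_cancel]
  rw [gammaMeasure]
  have hpdf : gammaPDF r θ = fun x => ((gammaPDFReal r θ x).toNNReal : ENNReal) := rfl
  rw [hpdf, integral_withDensity_eq_integral_smul
    ((measurable_gammaPDFReal r θ).real_toNNReal)]
  simp only [NNReal.smul_def, Real.coe_toNNReal', max_eq_left (gammaPDFReal_nonneg hr hθ _),
    smul_eq_mul]
  have hae : (fun u => gammaPDFReal r θ u * (u ^ p * Real.exp ((1 - u) * ξ)))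
      =ᵐ[volume] (Set.Ioi (0:ℝ)).indicator
        (fun u => gammaPDFReal r θ u * (u ^ p * Real.exp ((1 - u) * ξ))) := by
    filter_upwards [compl_mem_ae_iff.2 (Real.volume_singleton (a := (0:ℝ)))] with u hu
    rcases lt_or_gt_of_ne ((fun h => hu (by simp [h]) : u ≠ 0)) with h | h
    · rw [Set.indicator_of_notMem (by simp [not_lt, h.le])]
      simp [gammaPDFReal, not_le.mpr h]
    · rw [Set.indicator_of_mem (Set.mem_Ioi.mpr h)]
  rw [integral_congr_ae hae, integral_indicator measurableSet_Ioi]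
  rw [setIntegral_congr_fun measurableSet_Ioi (g := fun u =>
      (Real.exp ξ * (θ ^ r / Real.Gamma r)) * (u ^ (p + r - 1) * Real.exp (-((θ + ξ) * u))))
    (fun u hu => by
      have hu' : (0:ℝ) < u := hu
      simp only [gammaPDFReal, if_pos hu'.le]
      have e1 : u ^ (p + r - 1) = u ^ (r - 1) * u ^ p := by
        rw [← Real.rpow_add hu']; ring_nf
      have e2 : Real.exp (-(θ * u)) * Real.exp ((1 - u) * ξ)
          = Real.exp ξ * Real.exp (-((θ + ξ) * u)) := by
        rw [← Real.exp_add, ← Real.exp_add]; ring_nf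
      rw [e1]
      calc θ ^ r / Real.Gamma r * u ^ (r - 1) * Real.exp (-(θ * u)) *
            (u ^ p * Real.exp ((1 - u) * ξ))
          = θ ^ r / Real.Gamma r * u ^ (r - 1) * u ^ p *
            (Real.exp (-(θ * u)) * Real.exp ((1 - u) * ξ)) := by ring
        _ = _ := by rw [e2]; ring)]
  rw [integral_const_mul, Real.integral_rpow_mul_exp_neg_mul_Ioi hp hb]

/-- Linear gamma filter: with X = 1 − U, U ~ Gamma(shape r, rate θ),
Y = m/(1−X), τ = (r−1)/m, the gamma-noise Bayes posterior satisfies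
∫ (m/(1−x)) (1−x)^{mt} e^{xξ} π(dx) / ∫ (1−x)^{mt} e^{xξ} π(dx) = (ξ + θ)/(t + τ),
where π is the law of X. -/
theorem linear_gamma_filter
    (m r θ t ξ : ℝ) (hm : 0 < m) (hr : 1 < r) (hθ : 0 < θ) (ht : 0 < t) (hξ : 0 < ξ) :
    (∫ x, (m / (1 - x)) * (1 - x) ^ (m * t) * Real.exp (x * ξ)
        ∂((ProbabilityTheory.gammaMeasure r θ).map (fun u => 1 - u)))
      / (∫ x, (1 - x) ^ (m * t) * Real.exp (x * ξ)
        ∂((ProbabilityTheory.gammaMeasure r θ).map (fun u => 1 - u)))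
      = (ξ + θ) / (t + (r - 1) / m) := by
  have hr0 : 0 < r := lt_trans one_pos hr
  have hb : 0 < θ + ξ := by linarith
  have hmeas : Measurable fun u : ℝ => 1 - u := measurable_const.sub measurable_id
  -- a.e. positivity under the gamma measure
  have h0 : ∀ᵐ u ∂(gammaMeasure r θ), 0 < u := by
    rw [ae_iff]
    have hset : {u : ℝ | ¬ 0 < u} = Set.Iic 0 := by ext u; simp
    rw [hset, gammaMeasure, withDensity_apply _ measurableSet_Iic]
    rw [setLIntegral_congr_fun measurableSet_Iic (fun u (hu : u ≤ 0) => by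
      rcases lt_or_eq_of_le hu with h | h
      · exact gammaPDF_of_neg h
      · subst h
        rw [gammaPDF_of_nonneg le_rfl]
        simp [Real.zero_rpow (by intro hc; linarith [sub_eq_zero.mp hc] : r - 1 ≠ 0)])]
    simp
  have hν : ∀ᵐ x ∂((gammaMeasure r θ).map (fun u => 1 - u)), 0 < 1 - x := by
    have hs : MeasurableSet {x : ℝ | 0 < 1 - x} := by
      have : {x : ℝ | 0 < 1 - x} = Set.Iio 1 := by ext x; simp [sub_pos]
      rw [this]; exact measurableSet_Iio
    rw [ae_map_iff hmeas.aemeasurable hs]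
    filter_upwards [h0] with u hu
    simp only [Set.mem_setOf_eq, sub_sub_cancel]
    exact hu
  have hnum : (∫ x, (m / (1 - x)) * (1 - x) ^ (m * t) * Real.exp (x * ξ)
        ∂((gammaMeasure r θ).map (fun u => 1 - u)))
      = m * ∫ x, (1 - x) ^ (m * t - 1) * Real.exp (x * ξ)
        ∂((gammaMeasure r θ).map (fun u => 1 - u)) := by
    rw [← integral_const_mul]
    refine integral_congr_ae ?_
    filter_upwards [hν] with x hx
    rw [Real.rpow_sub hx, Real.rpow_one]
    field_simp
  rw [hnum, gamma_map_aux r θ ξ (m * t - 1) hr0 hθ hb (by nlinarith),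
    gamma_map_aux r θ ξ (m * t) hr0 hθ hb (by nlinarith)]
  have hs : 0 < m * t + r - 1 := by nlinarith
  have hs' : 0 < m * t - 1 + r := by nlinarith
  have hΓ : Real.Gamma (m * t + r) = (m * t - 1 + r) * Real.Gamma (m * t - 1 + r) := by
    rw [show m * t + r = (m * t - 1 + r) + 1 by ring, Real.Gamma_add_one hs'.ne']
  have hpow : (1 / (θ + ξ)) ^ (m * t + r) = (1 / (θ + ξ)) ^ (m * t - 1 + r) * (1 / (θ + ξ)) := by
    rw [show m * t + r = (m * t - 1 + r) + 1 by ring,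
      Real.rpow_add (by positivity), Real.rpow_one]
  obtain ⟨E, hEpos, hEdef⟩ : ∃ E, 0 < E ∧ Real.exp ξ = E := ⟨_, Real.exp_pos _, rfl⟩
  obtain ⟨C, hCpos, hCdef⟩ : ∃ C, 0 < C ∧ θ ^ r / Real.Gamma r = C :=
    ⟨_, div_pos (Real.rpow_pos_of_pos hθ r) (Real.Gamma_pos_of_pos hr0), rfl⟩
  obtain ⟨P, hPpos, hPdef⟩ : ∃ P, 0 < P ∧ (1 / (θ + ξ)) ^ (m * t - 1 + r) = P :=
    ⟨_, Real.rpow_pos_of_pos (by positivity) _, rfl⟩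
  obtain ⟨G, hGpos, hGdef⟩ : ∃ G, 0 < G ∧ Real.Gamma (m * t - 1 + r) = G :=
    ⟨_, Real.Gamma_pos_of_pos hs', rfl⟩
  rw [hΓ, hpow, hPdef, hGdef, hEdef, hCdef]
  have hq : 0 < 1 / (θ + ξ) := by positivity
  have hd : 0 < t + (r - 1) / m := by
    have : 0 < (r - 1) / m := div_pos (by linarith) hm
    linarith
  rw [div_eq_div_iff
    (by apply_rules [mul_pos] : (0:ℝ) < E * C * (P * (1 / (θ + ξ)) * ((m * t - 1 + r) * G))).ne'
    hd.ne']
  field_simp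
  ring
end
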